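/- Let p₁, p₂ ∈ (0,1). For k ≥ 1 set a_k = (P_BKP^k)₀₂ and b_k = (P_BKP^k)₂₂. Then the normalized variance of the success count converges: lim_{N→∞} (1/N)·[ ∑_{k=1}^{N} a_k(1−a_k) + 2·∑_{1≤k<l≤N} (b_{l−k} − a_l)·a_k ] = p₁p₂[(1+p₁)² − p₁p₂(3+p₁)]/(1+p₁)³. (The bracketed quantity is N²τ²·Var[T], the exact variance of the number of successes in N steps of double-heralded entanglement generation started from the failure state; thus the leading-order throughput variance is Var[T] ≈ p₁p₂[(1+p₁)² − p₁p₂(3+p₁)]/((1+p₁)³·N·τ²).) -/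

import Mathlib

open Finset Filter Topology

lemma BKP_col2 (p₁ p₂ : ℝ) (hne : (1:ℝ) + p₁ ≠ 0) (m : ℕ) :
    (!![1 - p₁, p₁, 0; 1 - p₂, 0, p₂; 1 - p₁, p₁, 0] ^ (m+1) : Matrix (Fin 3) (Fin 3) ℝ) 0 2
      = p₁*p₂/(1+p₁) + (p₂/(1+p₁)) * (-p₁)^(m+1) ∧
    (!![1 - p₁, p₁, 0; 1 - p₂, 0, p₂; 1 - p₁, p₁, 0] ^ (m+1) : Matrix (Fin 3) (Fin 3) ℝ) 1 2
      = p₁*p₂/(1+p₁) + (p₂/(1+p₁)) * (-p₁)^m ∧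
    (!![1 - p₁, p₁, 0; 1 - p₂, 0, p₂; 1 - p₁, p₁, 0] ^ (m+1) : Matrix (Fin 3) (Fin 3) ℝ) 2 2
      = p₁*p₂/(1+p₁) + (p₂/(1+p₁)) * (-p₁)^(m+1) := by
  induction m with
  | zero =>
    rw [pow_one]
    refine ⟨?_, ?_, ?_⟩ <;> simp <;> field_simp <;> ring
  | succ n ih =>
    obtain ⟨h0, h1, h2⟩ := ih
    rw [show n + 1 + 1 = (n+1) + 1 from rfl, pow_succ']
    refine ⟨?_, ?_, ?_⟩ <;>
      · rw [Matrix.mul_apply, Fin.sum_univ_three, h0, h1, h2]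
        simp
        field_simp
        ring

lemma BKP_S1 (r : ℝ) (hr : 1 - r ≠ 0) (m : ℕ) :
    ∑ k ∈ Icc 1 m, r ^ k = (r - r ^ (m+1)) / (1 - r) := by
  induction m with
  | zero => simp
  | succ n ih =>
    rw [Finset.sum_Icc_succ_top (Nat.le_add_left 1 n), ih]
    field_simp
    ring

lemma BKP_S2 (r : ℝ) (hr : 1 - r ≠ 0) (m : ℕ) :
    ∑ k ∈ Icc 1 m, r ^ (m + 1 - k) = (r - r ^ (m+1)) / (1 - r) := by
  induction m with
  | zero => simp
  | succ n ih =>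
    rw [Finset.sum_Icc_succ_top (Nat.le_add_left 1 n)]
    have : ∀ k ∈ Icc 1 n, r ^ (n + 1 + 1 - k) = r * r ^ (n + 1 - k) := by
      intro k hk
      rw [← pow_succ']
      congr 1
      simp only [Finset.mem_Icc] at hk
      omega
    rw [Finset.sum_congr rfl this, ← Finset.mul_sum, ih,
      show n + 1 + 1 - (n+1) = 1 by omega, pow_one]
    field_simp
    ring

lemma BKP_S3 (r : ℝ) (m : ℕ) :
    ∑ k ∈ Icc 1 m, r ^ (m + 1 - k) * r ^ k = (m : ℝ) * r ^ (m+1) := by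
  have : ∀ k ∈ Icc 1 m, r ^ (m + 1 - k) * r ^ k = r ^ (m+1) := by
    intro k hk
    rw [← pow_add]
    congr 1
    simp only [Finset.mem_Icc] at hk
    omega
  rw [Finset.sum_congr rfl this, Finset.sum_const, Nat.card_Icc]
  simp [nsmul_eq_mul]

lemma BKP_exch (f : ℕ → ℕ → ℝ) (N : ℕ) :
    ∑ k ∈ Icc 1 N, ∑ l ∈ Icc (k+1) N, f k l
      = ∑ l ∈ Icc 1 N, ∑ k ∈ Icc 1 (l-1), f k l := by
  induction N with
  | zero => simp
  | succ n ih =>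
    rw [Finset.sum_Icc_succ_top (Nat.le_add_left 1 n),
        Finset.sum_Icc_succ_top (Nat.le_add_left 1 n)]
    have h1 : ∀ k ∈ Icc 1 n, ∑ l ∈ Icc (k+1) (n+1), f k l
        = (∑ l ∈ Icc (k+1) n, f k l) + f k (n+1) := by
      intro k hk
      simp only [Finset.mem_Icc] at hk
      exact Finset.sum_Icc_succ_top (by omega) _
    rw [Finset.sum_congr rfl h1, Finset.sum_add_distrib, ih]
    have h2 : Icc (n+1+1) (n+1) = (∅ : Finset ℕ) := by
      rw [Finset.Icc_eq_empty]; omega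
    rw [h2]
    simp [Nat.add_sub_cancel]

/-- Leading-order throughput variance of double-heralded entanglement generation:
for `p₁, p₂ ∈ (0,1)`, with `a_k = (P_BKP^k)₀₂` and `b_k = (P_BKP^k)₂₂`, the
normalized variance of the success count over `N` steps converges as `N → ∞` to
`p₁p₂[(1+p₁)² − p₁p₂(3+p₁)]/(1+p₁)³`. -/
theorem bkp_throughput_variance_limit (p₁ p₂ : ℝ)
    (h₁ : 0 < p₁) (h₁' : p₁ < 1) (h₂ : 0 < p₂) (h₂' : p₂ < 1) :
    let P : Matrix (Fin 3) (Fin 3) ℝ :=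
      !![1 - p₁, p₁, 0; 1 - p₂, 0, p₂; 1 - p₁, p₁, 0]
    let a : ℕ → ℝ := fun k => (P ^ k) 0 2
    let b : ℕ → ℝ := fun k => (P ^ k) 2 2
    Filter.Tendsto
      (fun N : ℕ =>
        ((∑ k ∈ Finset.Icc 1 N, a k * (1 - a k)) +
          2 * ∑ k ∈ Finset.Icc 1 N, ∑ l ∈ Finset.Icc (k + 1) N,
            (b (l - k) - a l) * a k) / N)
      Filter.atTop
      (nhds (p₁ * p₂ * ((1 + p₁) ^ 2 - p₁ * p₂ * (3 + p₁)) / (1 + p₁) ^ 3)) := by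
  intro P a b
  have hne : (1:ℝ) + p₁ ≠ 0 := by positivity
  set q : ℝ := p₁*p₂/(1+p₁) with hq
  set cc : ℝ := p₂/(1+p₁) with hcc
  set r : ℝ := -p₁ with hrdef
  have hr1 : (1:ℝ) - r ≠ 0 := by rw [hrdef, sub_neg_eq_add]; exact hne
  have ha : ∀ m : ℕ, a (m+1) = q + cc * r^(m+1) := fun m => (BKP_col2 p₁ p₂ hne m).1
  have hb : ∀ m : ℕ, b (m+1) = q + cc * r^(m+1) := fun m => (BKP_col2 p₁ p₂ hne m).2.2
  set u : ℕ → ℝ := fun j => a j * (1 - a j)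
      + 2 * ∑ k ∈ Icc 1 (j-1), (b (j-k) - a j) * a k with hu
  -- rewrite the double sum
  have key : ∀ N : ℕ,
      ((∑ k ∈ Icc 1 N, a k * (1 - a k)) +
        2 * ∑ k ∈ Icc 1 N, ∑ l ∈ Icc (k + 1) N, (b (l - k) - a l) * a k)
      = ∑ j ∈ Icc 1 N, u j := by
    intro N
    rw [BKP_exch (fun k l => (b (l - k) - a l) * a k) N, Finset.mul_sum,
      ← Finset.sum_add_distrib]
  -- closed form for u (m+1)
  set φ : ℝ → ℝ → ℝ := fun x y =>
      (q + cc*x) * (1 - (q + cc*x)) +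
        2 * ((cc*q)*((r - x)/(1-r)) + cc^2*y - (cc*q)*y - (cc^2*x)*((r - x)/(1-r)))
    with hφ
  have huc : ∀ m : ℕ, u (m+1) = φ (r^(m+1)) ((m:ℝ) * r^(m+1)) := by
    intro m
    have hterm : ∀ k ∈ Icc 1 m, (b (m+1-k) - a (m+1)) * a k
        = (cc*q)*r^(m+1-k) + cc^2*(r^(m+1-k)*r^k) - (cc*q)*r^(m+1) - (cc^2*r^(m+1))*r^k := by
      intro k hk
      simp only [Finset.mem_Icc] at hk
      have h1 : m + 1 - k = (m - k) + 1 := by omega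
      have hbk : b (m+1-k) = q + cc * r^(m+1-k) := by rw [h1]; exact hb (m-k)
      have hak : a k = q + cc * r^k := by
        obtain ⟨k', rfl⟩ : ∃ k', k = k'+1 := ⟨k-1, by omega⟩
        exact ha k'
      rw [hbk, hak, ha m]
      ring
    have hinner : ∑ k ∈ Icc 1 m, (b (m+1-k) - a (m+1)) * a k
        = (cc*q)*((r - r^(m+1))/(1-r)) + cc^2*((m:ℝ)*r^(m+1))
          - (m:ℝ)*((cc*q)*r^(m+1)) - (cc^2*r^(m+1))*((r - r^(m+1))/(1-r)) := by
      rw [Finset.sum_congr rfl hterm]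
      simp only [Finset.sum_sub_distrib, Finset.sum_add_distrib, ← Finset.mul_sum,
        Finset.sum_const, Nat.card_Icc, nsmul_eq_mul, BKP_S1 r hr1 m, BKP_S2 r hr1 m,
        BKP_S3 r m, Nat.add_sub_cancel]
      push_cast
      ring
    have hj : (m + 1) - 1 = m := by omega
    rw [hu]
    simp only [hj]
    rw [hinner, ha m, hφ]
    ring
  -- the target value
  have hval : φ 0 0 = p₁ * p₂ * ((1 + p₁) ^ 2 - p₁ * p₂ * (3 + p₁)) / (1 + p₁) ^ 3 := by
    rw [hφ]
    simp only [hq, hcc, hrdef, sub_neg_eq_add]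
    field_simp
    ring
  -- limits
  have hrn : ‖r‖ < 1 := by
    rw [hrdef, Real.norm_eq_abs, abs_neg, abs_of_pos h₁]; exact h₁'
  have hx : Tendsto (fun m : ℕ => r ^ (m+1)) atTop (𝓝 0) :=
    (tendsto_pow_atTop_nhds_zero_of_norm_lt_one hrn).comp (tendsto_add_atTop_nat 1)
  have hy : Tendsto (fun m : ℕ => (m:ℝ) * r ^ (m+1)) atTop (𝓝 0) := by
    have hs := (summable_pow_mul_geometric_of_norm_lt_one 1 hrn).tendsto_atTop_zero
    have := hs.mul_const r
    rw [zero_mul] at this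
    refine this.congr fun m => ?_
    rw [pow_one, pow_succ]
    ring
  have hcont : Continuous (fun pq : ℝ × ℝ => φ pq.1 pq.2) := by
    rw [hφ]
    simp only [div_eq_mul_inv]
    fun_prop
  have hL : Tendsto (fun m : ℕ => u (m+1)) atTop
      (𝓝 (p₁ * p₂ * ((1 + p₁) ^ 2 - p₁ * p₂ * (3 + p₁)) / (1 + p₁) ^ 3)) := by
    have := (hcont.tendsto (0, 0)).comp (hx.prodMk_nhds hy)
    rw [← hval]
    exact this.congr fun m => (huc m).symm
  have final := hL.cesaro
  refine final.congr fun N => ?_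
  rw [key N]
  have : ∑ j ∈ Icc 1 N, u j = ∑ i ∈ range N, u (i+1) := by
    rw [← Finset.Ico_add_one_right_eq_Icc, Finset.sum_Ico_eq_sum_range]
    simp [Nat.add_comm]
  rw [this, div_eq_inv_mul]
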